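/- Let L be a Lie algebra over a field F such that the abelianization L/L² is finite-dimensional, and let h: L × L → L⊗L be a universal Lie pairing. Then J₂(L) ≅ (L□L) × M(L) as Lie algebras; more precisely, ker κ is the internal direct sum of L□L and a Lie ideal isomorphic to the Schur multiplier M(L). -/

import Mathlib

universe u v w x

/-- A Lie pairing `ρ : L × L → H` of Lie algebras over a field `F`:
a bilinear map satisfying the three Lie-pairing relations. -/
structure IsLiePairing (F : Type u) [Field F] {L : Type v} {H : Type w}
    [LieRing L] [LieAlgebra F L] [LieRing H] [LieAlgebra F H]
    (ρ : L → L → H) : Prop where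
  add_left : ∀ l l' k : L, ρ (l + l') k = ρ l k + ρ l' k
  add_right : ∀ l k k' : L, ρ l (k + k') = ρ l k + ρ l k'
  smul_left : ∀ (c : F) (l k : L), ρ (c • l) k = c • ρ l k
  smul_right : ∀ (c : F) (l k : L), ρ l (c • k) = c • ρ l k
  bracket_left : ∀ l l' s : L, ρ ⁅l, l'⁆ s = ρ l ⁅l', s⁆ - ρ l' ⁅l, s⁆
  bracket_right : ∀ l s s' : L, ρ l ⁅s, s'⁆ = ρ ⁅s', l⁆ s - ρ ⁅s, l⁆ s'
  bracket_bracket : ∀ l s l' s' : L, ρ ⁅l, s⁆ ⁅l', s'⁆ = -⁅ρ s l, ρ l' s'⁆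

/-- `h : L × L → T` is a universal Lie pairing: `T` plays the role of the
nonabelian tensor square `L ⊗ L`, with `h l l' = l ⊗ l'`. -/
structure IsUniversalLiePairing (F : Type u) [Field F] (L : Type v) (T : Type w)
    [LieRing L] [LieAlgebra F L] [LieRing T] [LieAlgebra F T]
    (h : L → L → T) : Prop where
  isLiePairing : IsLiePairing F h
  universal : ∀ (Q : Type (max u v w)) [LieRing Q] [LieAlgebra F Q]
      (h' : L → L → Q), IsLiePairing F h' →
        ∃! ζ : T →ₗ⁅F⁆ Q, ∀ x y : L, ζ (h x y) = h' x y
/-- The product of two Lie rings is a Lie ring. -/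
instance prodLieRing (A : Type u) (B : Type v) [LieRing A] [LieRing B] :
    LieRing (A × B) where
  bracket x y := (⁅x.1, y.1⁆, ⁅x.2, y.2⁆)
  add_lie x y z := by simp [Prod.ext_iff, add_lie]
  lie_add x y z := by simp [Prod.ext_iff, lie_add]
  lie_self x := by simp [Prod.ext_iff]
  leibniz_lie x y z := by simp [Prod.ext_iff]

/-- The product of two Lie algebras is a Lie algebra. -/
instance prodLieAlgebra (F : Type x) [Field F] (A : Type u) (B : Type v)
    [LieRing A] [LieRing B] [LieAlgebra F A] [LieAlgebra F B] :
    LieAlgebra F (A × B) where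
  lie_smul t x y := Prod.ext (lie_smul t x.1 y.1) (lie_smul t x.2 y.2)

/-! ### Auxiliary material -/

section ULiftLie

variable {A : Type u} [LieRing A]

instance uliftLieRing : LieRing (ULift.{v} A) where
  bracket x y := ⟨⁅x.down, y.down⁆⟩
  add_lie x y z := by apply ULift.ext; exact add_lie _ _ _
  lie_add x y z := by apply ULift.ext; exact lie_add _ _ _
  lie_self x := by apply ULift.ext; exact lie_self _
  leibniz_lie x y z := by apply ULift.ext; exact leibniz_lie _ _ _

instance uliftLieAlgebra {F : Type x} [Field F] [LieAlgebra F A] :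
    LieAlgebra F (ULift.{v} A) where
  lie_smul t x y := by apply ULift.ext; exact lie_smul t x.down y.down

/-- `ULift.up` as a morphism of Lie algebras. -/
def uliftUpLieHom {F : Type x} [Field F] [LieAlgebra F A] : A →ₗ⁅F⁆ ULift.{v} A where
  toFun := ULift.up
  map_add' _ _ := rfl
  map_smul' _ _ := rfl
  map_lie' := rfl

@[simp] theorem uliftUpLieHom_apply {F : Type x} [Field F] [LieAlgebra F A] (a : A) :
    uliftUpLieHom (F := F) a = (⟨a⟩ : ULift.{v} A) := rfl

/-- `ULift.down` as a morphism of Lie algebras. -/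
def uliftDownLieHom {F : Type x} [Field F] [LieAlgebra F A] : ULift.{v} A →ₗ⁅F⁆ A where
  toFun := ULift.down
  map_add' _ _ := rfl
  map_smul' _ _ := rfl
  map_lie' := rfl

end ULiftLie

section PairingLemmas

variable {F : Type u} [Field F] {L : Type v} {H : Type w}
    [LieRing L] [LieAlgebra F L] [LieRing H] [LieAlgebra F H]
    {ρ : L → L → H}

theorem IsLiePairing.zero_left (P : IsLiePairing F ρ) (k : L) : ρ 0 k = 0 := by
  have := P.smul_left 0 0 k; simpa using this

theorem IsLiePairing.zero_right (P : IsLiePairing F ρ) (l : L) : ρ l 0 = 0 := by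
  have := P.smul_right 0 l 0; simpa using this

theorem IsLiePairing.neg_left (P : IsLiePairing F ρ) (l k : L) : ρ (-l) k = -ρ l k := by
  have := P.smul_left (-1) l k; simpa [neg_one_smul] using this

end PairingLemmas

/-- Build a Lie algebra equivalence out of a linear equivalence between Lie algebras
with trivial brackets. -/
def trivLieEquiv {F : Type x} [Field F] {A : Type u} {B : Type v}
    [LieRing A] [LieAlgebra F A] [LieRing B] [LieAlgebra F B]
    (e : A ≃ₗ[F] B) (hA : ∀ a b : A, ⁅a, b⁆ = 0) (hB : ∀ a b : B, ⁅a, b⁆ = 0) :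
    A ≃ₗ⁅F⁆ B :=
  { toLieHom := { e.toLinearMap with
      map_lie' := by intro a b; show e ⁅a,b⁆ = ⁅e a, e b⁆; rw [hA, hB, map_zero] }
    invFun := e.symm
    left_inv := e.left_inv
    right_inv := e.right_inv }

/-- If `L/L²` is finite-dimensional then `J₂(L) ≅ (L□L) × M(L)`:
the kernel of `κ : L⊗L → L, l⊗l' ↦ [l,l']` is the internal direct sum of the
square `L□L` and a Lie ideal isomorphic to the Schur multiplier
`M(L) = ker (κ' : L∧L → L)`. -/
theorem J2_isDirectSum_square_schurMultiplier (F : Type x) [Field F]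
    (L : Type v) (T : Type w) [LieRing L] [LieAlgebra F L]
    [LieRing T] [LieAlgebra F T]
    (h : L → L → T) (hh : IsUniversalLiePairing F L T h)
    [FiniteDimensional F (L ⧸ ⁅(⊤ : LieIdeal F L), (⊤ : LieIdeal F L)⁆)]
    (sq : LieIdeal F T)
    (hsq : (sq : Submodule F T) = Submodule.span F {z : T | ∃ l : L, z = h l l})
    (κ : T →ₗ⁅F⁆ L) (hκ : ∀ l l' : L, κ (h l l') = ⁅l, l'⁆)
    (κ' : (T ⧸ sq) →ₗ⁅F⁆ L)
    (hκ' : ∀ z : T, κ' (LieSubmodule.Quotient.mk (N := sq) z) = κ z) :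
    ∃ W : LieIdeal F T, sq ⊓ W = ⊥ ∧ sq ⊔ W = κ.ker ∧
      Nonempty (W ≃ₗ⁅F⁆ κ'.ker) ∧
      Nonempty (κ.ker ≃ₗ⁅F⁆ sq × κ'.ker) := by
  classical
  obtain ⟨P, univ⟩ := hh
  -- generators
  set G : Set T := Set.range (fun p : L × L => h p.1 p.2) with hG
  have hmemG : ∀ x y : L, h x y ∈ Submodule.span F G :=
    fun x y => Submodule.subset_span ⟨(x, y), rfl⟩
  -- bracket of generators
  have hbrk : ∀ a b c d : L, ⁅h a b, h c d⁆ = h ⁅a, b⁆ ⁅c, d⁆ := by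
    intro a b c d
    have h1 := P.bracket_bracket b a c d
    -- h ⁅b,a⁆ ⁅c,d⁆ = -⁅h a b, h c d⁆
    have h2 : h ⁅a, b⁆ ⁅c, d⁆ = -h ⁅b, a⁆ ⁅c, d⁆ := by
      rw [← lie_skew a b, P.neg_left]
    rw [h2, h1, neg_neg]
  -- the span of the generators is a Lie subalgebra
  have hliemem : ∀ a ∈ Submodule.span F G, ∀ b ∈ Submodule.span F G,
      ⁅a, b⁆ ∈ Submodule.span F G := by
    intro a ha b hb
    induction ha using Submodule.span_induction with
    | mem a hma =>
      obtain ⟨⟨a1, a2⟩, rfl⟩ := hma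
      induction hb using Submodule.span_induction with
      | mem b hmb =>
        obtain ⟨⟨b1, b2⟩, rfl⟩ := hmb
        rw [hbrk]; exact hmemG _ _
      | zero => simpa using Submodule.zero_mem _
      | add y z _ _ hy hz => rw [lie_add]; exact Submodule.add_mem _ hy hz
      | smul c y _ hy => rw [lie_smul]; exact Submodule.smul_mem _ _ hy
    | zero => simpa using Submodule.zero_mem _
    | add y z _ _ hy hz => rw [add_lie]; exact Submodule.add_mem _ hy hz
    | smul c y _ hy => rw [smul_lie]; exact Submodule.smul_mem _ _ hy
  set S : LieSubalgebra F T :=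
    { Submodule.span F G with
      lie_mem' := fun {a b} ha hb => hliemem a ha b hb } with hS
  have hSmem : ∀ t : T, t ∈ S ↔ t ∈ Submodule.span F G := fun t => Iff.rfl
  -- h valued in S is a Lie pairing
  have hPS : IsLiePairing F (fun x y : L => (⟨h x y, hmemG x y⟩ : S)) := by
    constructor <;> intros <;> apply Subtype.ext <;>
      first
        | exact P.add_left ..
        | exact P.add_right ..
        | exact P.smul_left ..
        | exact P.smul_right ..
        | exact P.bracket_left ..
        | exact P.bracket_right ..
        | exact P.bracket_bracket ..
  -- lift to ULift to fix universes
  have hPS' : IsLiePairing F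
      (fun x y : L => (⟨(⟨h x y, hmemG x y⟩ : S)⟩ : ULift.{max x v} S)) := by
    constructor <;> intros <;> apply ULift.ext <;>
      first
        | exact hPS.add_left ..
        | exact hPS.add_right ..
        | exact hPS.smul_left ..
        | exact hPS.smul_right ..
        | exact hPS.bracket_left ..
        | exact hPS.bracket_right ..
        | exact hPS.bracket_bracket ..
  obtain ⟨ζ, hζ, -⟩ := univ (ULift.{max x v} S) _ hPS'
  -- θ : ULift S → T
  set θ : ULift.{max x v} S →ₗ⁅F⁆ T := S.incl.comp uliftDownLieHom with hθ
  have hPT : IsLiePairing F (fun x y : L => (⟨h x y⟩ : ULift.{max x v} T)) := by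
    constructor <;> intros <;> apply ULift.ext <;>
      first
        | exact P.add_left ..
        | exact P.add_right ..
        | exact P.smul_left ..
        | exact P.smul_right ..
        | exact P.bracket_left ..
        | exact P.bracket_right ..
        | exact P.bracket_bracket ..
  obtain ⟨ξ, -, hξuniq⟩ := univ (ULift.{max x v} T) _ hPT
  have h1 : (uliftUpLieHom.comp (θ.comp ζ) : T →ₗ⁅F⁆ ULift.{max x v} T)
      = uliftUpLieHom := by
    have e1 := hξuniq (uliftUpLieHom.comp (θ.comp ζ)) (by
      intro x y
      rw [LieHom.comp_apply, LieHom.comp_apply, hζ]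
      rfl)
    have e2 := hξuniq uliftUpLieHom (fun x y => rfl)
    rw [e1, e2]
  -- T is spanned by the generators
  have hspan : ∀ t : T, t ∈ Submodule.span F G := by
    intro t
    have h2 : θ (ζ t) = t := by
      have h3 := congrArg (fun f : T →ₗ⁅F⁆ ULift.{max x v} T => f t) h1
      simp only [LieHom.comp_apply, uliftUpLieHom_apply] at h3
      exact congrArg ULift.down h3
    rw [← h2]
    exact ((ζ t).down).2
  -- key identity: the bracket of T factors through κ
  have key2 : ∀ (c d : L) (b : T), ⁅h c d, b⁆ = h (κ (h c d)) (κ b) := by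
    intro c d b
    induction hspan b using Submodule.span_induction with
    | mem b hmb =>
      obtain ⟨⟨b1, b2⟩, rfl⟩ := hmb
      rw [hbrk, hκ, hκ]
    | zero => rw [lie_zero, map_zero κ, P.zero_right]
    | add y z _ _ hy hz => rw [lie_add, hy, hz, map_add κ, P.add_right]
    | smul c y _ hy => rw [lie_smul, hy, map_smul κ, P.smul_right]
  have key : ∀ a b : T, ⁅a, b⁆ = h (κ a) (κ b) := by
    intro a b
    induction hspan a using Submodule.span_induction with
    | mem a hma =>
      obtain ⟨⟨a1, a2⟩, rfl⟩ := hma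
      exact key2 _ _ _
    | zero => rw [zero_lie, map_zero κ, P.zero_left]
    | add y z _ _ hy hz => rw [add_lie, hy, hz, map_add κ, P.add_left]
    | smul c y _ hy => rw [smul_lie, hy, map_smul κ, P.smul_left]
  -- kernel of κ is central
  have central : ∀ (t : T), κ t = 0 → ∀ a : T, ⁅a, t⁆ = 0 := by
    intro t ht a
    rw [key, ht, P.zero_right]
  -- sq is contained in ker κ
  set K : Submodule F T := LieSubmodule.toSubmodule κ.ker with hK
  have hmemK : ∀ t : T, t ∈ K ↔ κ t = 0 := by
    intro t
    rw [hK, LieSubmodule.mem_toSubmodule, LieHom.mem_ker]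
  set sq' : Submodule F T := LieSubmodule.toSubmodule sq with hsq'
  have hsq2 : sq' = Submodule.span F {z : T | ∃ l : L, z = h l l} := by
    rw [hsq', ← LieIdeal.toLieSubalgebra_toSubmodule]; exact hsq
  have hsqK : sq' ≤ K := by
    rw [hsq2]
    apply Submodule.span_le.mpr
    rintro z ⟨l, rfl⟩
    rw [SetLike.mem_coe, hmemK, hκ, lie_self]
  -- construct the complement
  obtain ⟨q, hq⟩ := Submodule.exists_isCompl (sq'.comap K.subtype)
  set W₀ : Submodule F T := q.map K.subtype with hW₀
  have hW₀K : W₀ ≤ K := by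
    rw [hW₀]; exact Submodule.map_subtype_le K q
  have hmap_p : (sq'.comap K.subtype).map K.subtype = sq' := by
    rw [Submodule.map_comap_subtype, inf_eq_right.mpr hsqK]
  have hinf : sq' ⊓ W₀ = ⊥ := by
    rw [← hmap_p, hW₀, ← Submodule.map_inf _ K.injective_subtype, hq.inf_eq_bot,
      Submodule.map_bot]
  have hsup : sq' ⊔ W₀ = K := by
    rw [← hmap_p, hW₀, ← Submodule.map_sup, hq.sup_eq_top, Submodule.map_subtype_top]
  set W : LieIdeal F T :=
    { W₀ with
      lie_mem := fun {a m} hm => by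
        have : ⁅a, m⁆ = 0 := central m ((hmemK m).mp (hW₀K hm)) a
        rw [this]; exact W₀.zero_mem } with hW
  have hWcoe : LieSubmodule.toSubmodule W = W₀ := rfl
  -- the quotient map, restricted to W₀, is a linear isomorphism onto ker κ'
  set Nker' : Submodule F (T ⧸ sq) := LieSubmodule.toSubmodule κ'.ker with hNker'
  have hmk : ∀ z : T, (LieSubmodule.Quotient.mk' sq) z
      = LieSubmodule.Quotient.mk (N := sq) z := fun _ => rfl
  have hfmem : ∀ u : W₀, (LieSubmodule.Quotient.mk' sq).toLinearMap.comp W₀.subtype u ∈ Nker' := by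
    rintro ⟨u, hu⟩
    have : κ u = 0 := (hmemK u).mp (hW₀K hu)
    show (LieSubmodule.Quotient.mk' sq) u ∈ Nker'
    rw [hNker', LieSubmodule.mem_toSubmodule, LieHom.mem_ker, hmk, hκ', this]
  set f' : W₀ →ₗ[F] Nker' :=
    LinearMap.codRestrict Nker' ((LieSubmodule.Quotient.mk' sq).toLinearMap.comp W₀.subtype)
      hfmem with hf'
  have hinj : Function.Injective f' := by
    intro u v huv
    have h5 : (LieSubmodule.Quotient.mk' sq) ((u : T) - v) = 0 := by
      rw [map_sub]
      have := congrArg (Subtype.val) huv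
      change (LieSubmodule.Quotient.mk' sq) (u : T) = (LieSubmodule.Quotient.mk' sq) (v : T) at this
      rw [this, sub_self]
    have h6 : (u : T) - v ∈ sq' ⊓ W₀ := by
      constructor
      · rw [hsq']
        exact (LieSubmodule.Quotient.mk_eq_zero sq).mp h5
      · exact W₀.sub_mem u.2 v.2
    rw [hinf] at h6
    exact Subtype.ext (sub_eq_zero.mp h6)
  have hsurj : Function.Surjective f' := by
    rintro ⟨y, hy⟩
    obtain ⟨z, rfl⟩ := LieSubmodule.Quotient.surjective_mk' sq y
    have hz : κ z = 0 := by
      rw [hNker', LieSubmodule.mem_toSubmodule, LieHom.mem_ker, hmk, hκ'] at hy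
      exact hy
    have hzK : z ∈ sq' ⊔ W₀ := by rw [hsup]; exact (hmemK z).mpr hz
    obtain ⟨a, ha, b, hb, hab⟩ := Submodule.mem_sup.mp hzK
    refine ⟨⟨b, hb⟩, Subtype.ext ?_⟩
    show (LieSubmodule.Quotient.mk' sq) b = (LieSubmodule.Quotient.mk' sq) z
    rw [← hab, map_add]
    have ha0 : (LieSubmodule.Quotient.mk' sq) a = 0 := by
      rw [LieSubmodule.Quotient.mk_eq_zero]
      rw [hsq'] at ha
      exact ha
    rw [ha0, zero_add]
  have e₁ : W₀ ≃ₗ[F] Nker' := LinearEquiv.ofBijective f' ⟨hinj, hsurj⟩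
  have hWtriv : ∀ a b : W, ⁅a, b⁆ = 0 := by
    intro a b
    apply Subtype.ext
    show (⁅(a : T), (b : T)⁆ : T) = 0
    exact central _ ((hmemK _).mp (hW₀K b.2)) _
  have hKertriv : ∀ a b : κ'.ker, ⁅a, b⁆ = 0 := by
    intro a b
    apply Subtype.ext
    show (⁅(a : T ⧸ sq), (b : T ⧸ sq)⁆ : T ⧸ sq) = 0
    obtain ⟨za, hza⟩ := LieSubmodule.Quotient.surjective_mk' sq (a : T ⧸ sq)
    obtain ⟨zb, hzb⟩ := LieSubmodule.Quotient.surjective_mk' sq (b : T ⧸ sq)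
    have hbz : κ zb = 0 := by
      have := b.2
      rw [LieHom.mem_ker] at this
      rw [← hzb, hmk, hκ'] at this
      exact this
    rw [← hza, ← hzb, hmk, hmk, ← LieSubmodule.Quotient.mk_bracket,
      central zb hbz za]
    exact (LieSubmodule.Quotient.mk_eq_zero' (N := sq)).mpr sq.zero_mem
  refine ⟨W, ?_, ?_, ?_, ?_⟩
  · apply (LieSubmodule.toSubmodule_inj _ _).mp
    rw [LieSubmodule.inf_toSubmodule, hWcoe, ← hsq', hinf, LieSubmodule.bot_toSubmodule]
  · apply (LieSubmodule.toSubmodule_inj _ _).mp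
    rw [LieSubmodule.sup_toSubmodule, hWcoe, ← hsq', hsup, hK]
  · exact ⟨trivLieEquiv e₁ hWtriv hKertriv⟩
  · have hKtriv : ∀ a b : κ.ker, ⁅a, b⁆ = 0 := by
      intro a b
      apply Subtype.ext
      show (⁅(a : T), (b : T)⁆ : T) = 0
      have := b.2
      rw [LieHom.mem_ker] at this
      exact central _ this _
    have hsqtriv : ∀ a b : sq, ⁅a, b⁆ = 0 := by
      intro a b
      apply Subtype.ext
      show (⁅(a : T), (b : T)⁆ : T) = 0
      have hb : (b : T) ∈ sq' := by rw [hsq']; exact b.2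
      exact central _ ((hmemK _).mp (hsqK hb)) _
    have hPtriv : ∀ a b : sq × κ'.ker, ⁅a, b⁆ = 0 := by
      intro a b
      exact Prod.ext (hsqtriv a.1 b.1) (hKertriv a.2 b.2)
    have e4 : K ≃ₗ[F] (Submodule.comap K.subtype sq' × q) :=
      (Submodule.prodEquivOfIsCompl _ _ hq).symm
    have e5 : Submodule.comap K.subtype sq' ≃ₗ[F] sq' :=
      Submodule.comapSubtypeEquivOfLe hsqK
    have e6 : q ≃ₗ[F] W₀ :=
      Submodule.equivMapOfInjective K.subtype K.injective_subtype q
    have e7 : K ≃ₗ[F] (sq' × Nker') := e4.trans (e5.prodCongr (e6.trans e₁))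
    exact ⟨trivLieEquiv e7 hKtriv hPtriv⟩
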